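/- For the lid-driven cavity equilibrium problem, the zero velocity field u = 0 together with the pressure field p of Eq. (the piecewise log profile) satisfies the weak momentum balance for all divergence-free test fields v vanishing on ∂Ω: ∫_Ω p div v dv = ∫_B P̂ : ∇v dV with P̂ = -p_s F^{-T} + μ F(uΘ⊗uΘ) and F = I, i.e., the elastic body-force term is balanced by the pressure gradient. -/

import Mathlib

open Real MeasureTheory Matrix

/-- The matrix of partial derivatives `(∇v)_{ij} = ∂v_i/∂x_j`. -/
noncomputable def gradM (v : (Fin 2 → ℝ) → (Fin 2 → ℝ)) (x : Fin 2 → ℝ) :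
    Matrix (Fin 2) (Fin 2) ℝ := fun i j => fderiv ℝ v x (Pi.single j 1) i

/-- Frobenius inner product of matrices. -/
def frob (A B : Matrix (Fin 2) (Fin 2) ℝ) : ℝ := ∑ i, ∑ j, A i j * B i j

namespace RingAux
open Set

noncomputable def Ppt (l ρ θ : ℝ) : Fin 2 → ℝ :=
  ![ρ * Real.cos θ + l / 2, ρ * Real.sin θ + l / 2]

noncomputable def hF (v : (Fin 2 → ℝ) → (Fin 2 → ℝ)) (l ρ θ : ℝ) : ℝ :=
  v (Ppt l ρ θ) 0 * Real.cos θ + v (Ppt l ρ θ) 1 * Real.sin θ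

noncomputable def kF (v : (Fin 2 → ℝ) → (Fin 2 → ℝ)) (l ρ θ : ℝ) : ℝ :=
  -(v (Ppt l ρ θ) 0 * Real.sin θ) + v (Ppt l ρ θ) 1 * Real.cos θ

noncomputable def kθF (v : (Fin 2 → ℝ) → (Fin 2 → ℝ)) (l ρ θ : ℝ) : ℝ :=
  ρ * (Real.sin θ ^ 2 * gradM v (Ppt l ρ θ) 0 0
    - Real.sin θ * Real.cos θ * (gradM v (Ppt l ρ θ) 0 1 + gradM v (Ppt l ρ θ) 1 0)
    + Real.cos θ ^ 2 * gradM v (Ppt l ρ θ) 1 1) - hF v l ρ θ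

variable {v : (Fin 2 → ℝ) → (Fin 2 → ℝ)}

lemma fderiv_apply_vec (v : (Fin 2 → ℝ) → (Fin 2 → ℝ)) (x : Fin 2 → ℝ) (a b : ℝ) (i : Fin 2) :
    fderiv ℝ v x ![a, b] i = a * gradM v x i 0 + b * gradM v x i 1 := by
  have h : (![a, b] : Fin 2 → ℝ) = a • (Pi.single 0 1 : Fin 2 → ℝ) + b • (Pi.single 1 1 : Fin 2 → ℝ) := by
    funext j; fin_cases j <;> simp
  rw [h, map_add, _root_.map_smul, _root_.map_smul]
  rfl

lemma hasDerivAt_Ppt_theta (l ρ θ : ℝ) :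
    HasDerivAt (fun θ => Ppt l ρ θ) ![-(ρ * Real.sin θ), ρ * Real.cos θ] θ := by
  refine hasDerivAt_pi.2 fun i => ?_
  fin_cases i
  · simpa [Ppt] using (((Real.hasDerivAt_cos θ).const_mul ρ).add_const (l / 2))
  · simpa [Ppt] using (((Real.hasDerivAt_sin θ).const_mul ρ).add_const (l / 2))

lemma hasDerivAt_Ppt_rho (l ρ θ : ℝ) :
    HasDerivAt (fun ρ => Ppt l ρ θ) ![Real.cos θ, Real.sin θ] ρ := by
  refine hasDerivAt_pi.2 fun i => ?_
  fin_cases i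
  · simpa [Ppt] using ((hasDerivAt_id ρ).mul_const (Real.cos θ)).add_const (l / 2)
  · simpa [Ppt] using ((hasDerivAt_id ρ).mul_const (Real.sin θ)).add_const (l / 2)

lemma hasDerivAt_comp_theta (hv : ContDiff ℝ 1 v) (l ρ θ : ℝ) (i : Fin 2) :
    HasDerivAt (fun θ => v (Ppt l ρ θ) i)
      (-(ρ * Real.sin θ) * gradM v (Ppt l ρ θ) i 0
        + ρ * Real.cos θ * gradM v (Ppt l ρ θ) i 1) θ := by
  have hdv : HasDerivAt (fun θ => v (Ppt l ρ θ))
      (fderiv ℝ v (Ppt l ρ θ) ![-(ρ * Real.sin θ), ρ * Real.cos θ]) θ :=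
    ((hv.differentiable one_ne_zero) (Ppt l ρ θ)).hasFDerivAt.comp_hasDerivAt θ
      (hasDerivAt_Ppt_theta l ρ θ)
  have h := hasDerivAt_pi.1 hdv i
  rwa [fderiv_apply_vec] at h

lemma hasDerivAt_comp_rho (hv : ContDiff ℝ 1 v) (l ρ θ : ℝ) (i : Fin 2) :
    HasDerivAt (fun ρ => v (Ppt l ρ θ) i)
      (Real.cos θ * gradM v (Ppt l ρ θ) i 0
        + Real.sin θ * gradM v (Ppt l ρ θ) i 1) ρ := by
  have hdv : HasDerivAt (fun ρ => v (Ppt l ρ θ))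
      (fderiv ℝ v (Ppt l ρ θ) ![Real.cos θ, Real.sin θ]) ρ :=
    ((hv.differentiable one_ne_zero) (Ppt l ρ θ)).hasFDerivAt.comp_hasDerivAt ρ
      (hasDerivAt_Ppt_rho l ρ θ)
  have h := hasDerivAt_pi.1 hdv i
  rwa [fderiv_apply_vec] at h

lemma hasDerivAt_kF (hv : ContDiff ℝ 1 v) (l ρ θ : ℝ) :
    HasDerivAt (fun θ => kF v l ρ θ) (kθF v l ρ θ) θ := by
  have h0 := hasDerivAt_comp_theta hv l ρ θ 0
  have h1 := hasDerivAt_comp_theta hv l ρ θ 1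
  have h := ((h0.mul (Real.hasDerivAt_sin θ)).neg).add (h1.mul (Real.hasDerivAt_cos θ))
  refine h.congr_deriv (Eq.symm ?_)
  unfold kθF hF
  ring

lemma hasDerivAt_rho_mul_hF (hv : ContDiff ℝ 1 v)
    (hdiv : ∀ x : Fin 2 → ℝ, (gradM v x).trace = 0) (l ρ θ : ℝ) :
    HasDerivAt (fun ρ => ρ * hF v l ρ θ) (-(kθF v l ρ θ)) ρ := by
  have h0 := hasDerivAt_comp_rho hv l ρ θ 0
  have h1 := hasDerivAt_comp_rho hv l ρ θ 1
  have hh := ((h0.mul_const (Real.cos θ)).add (h1.mul_const (Real.sin θ)))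
  have h := (hasDerivAt_id ρ).mul hh
  simp only [id_eq, Pi.add_apply] at h
  refine h.congr_deriv (Eq.symm ?_)
  have htr := hdiv (Ppt l ρ θ)
  simp only [Matrix.trace, Matrix.diag, Fin.sum_univ_two] at htr
  have hsc := Real.sin_sq_add_cos_sq θ
  unfold kθF hF
  unfold hF at *
  linear_combination (-ρ * (gradM v (Ppt l ρ θ) 0 0 + gradM v (Ppt l ρ θ) 1 1)) * hsc
    + (-ρ) * htr

lemma integrand_eq (v : (Fin 2 → ℝ) → (Fin 2 → ℝ)) (μ pval l ρ θ : ℝ)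
    (htr : gradM v (Ppt l ρ θ) 0 0 + gradM v (Ppt l ρ θ) 1 1 = 0) :
    frob ((-pval) • (1 : Matrix (Fin 2) (Fin 2) ℝ) +
        μ • Matrix.vecMulVec ![-Real.sin θ, Real.cos θ] ![-Real.sin θ, Real.cos θ])
      (gradM v (Ppt l ρ θ)) * ρ = μ * (kθF v l ρ θ + hF v l ρ θ) := by
  unfold frob kθF hF
  simp only [Fin.sum_univ_two, Matrix.add_apply, Matrix.smul_apply, Matrix.one_apply,
    Matrix.vecMulVec_apply, smul_eq_mul]
  norm_num [Matrix.cons_val_zero, Matrix.cons_val_one, Matrix.head_cons]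
  linear_combination (-pval * ρ) * htr


lemma continuous_Ppt (l : ℝ) : Continuous fun q : ℝ × ℝ => Ppt l q.1 q.2 := by
  apply continuous_pi; intro i
  fin_cases i <;> · simp [Ppt]; fun_prop

lemma continuous_grad_comp (hv : ContDiff ℝ 1 v) (l : ℝ) (i j : Fin 2) :
    Continuous fun q : ℝ × ℝ => gradM v (Ppt l q.1 q.2) i j := by
  have h1 : Continuous fun x : Fin 2 → ℝ => fderiv ℝ v x (Pi.single j 1) :=
    (hv.continuous_fderiv one_ne_zero).clm_apply continuous_const
  exact ((continuous_apply i).comp h1).comp (continuous_Ppt l)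

lemma continuous_vP (hv : ContDiff ℝ 1 v) (l : ℝ) (i : Fin 2) :
    Continuous fun q : ℝ × ℝ => v (Ppt l q.1 q.2) i :=
  (continuous_apply i).comp (hv.continuous.comp (continuous_Ppt l))

lemma continuous_hF (hv : ContDiff ℝ 1 v) (l : ℝ) :
    Continuous fun q : ℝ × ℝ => hF v l q.1 q.2 := by
  unfold hF
  exact ((continuous_vP hv l 0).mul (Real.continuous_cos.comp continuous_snd)).add
    ((continuous_vP hv l 1).mul (Real.continuous_sin.comp continuous_snd))

lemma continuous_kθF (hv : ContDiff ℝ 1 v) (l : ℝ) :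
    Continuous fun q : ℝ × ℝ => kθF v l q.1 q.2 := by
  unfold kθF
  have hs : Continuous fun q : ℝ × ℝ => Real.sin q.2 := Real.continuous_sin.comp continuous_snd
  have hc : Continuous fun q : ℝ × ℝ => Real.cos q.2 := Real.continuous_cos.comp continuous_snd
  refine Continuous.sub (continuous_fst.mul ?_) (continuous_hF hv l)
  exact (((hs.pow 2).mul (continuous_grad_comp hv l 0 0)).sub
    ((hs.mul hc).mul ((continuous_grad_comp hv l 0 1).add (continuous_grad_comp hv l 1 0)))).add
    ((hc.pow 2).mul (continuous_grad_comp hv l 1 1))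

lemma kF_periodic (v : (Fin 2 → ℝ) → (Fin 2 → ℝ)) (l ρ : ℝ) : kF v l ρ π = kF v l ρ (-π) := by
  unfold kF Ppt
  simp [Real.sin_pi, Real.cos_pi, Real.sin_neg, Real.cos_neg]

lemma kθF_integral_zero (hv : ContDiff ℝ 1 v) (l ρ : ℝ) :
    ∫ θ in (-π)..π, kθF v l ρ θ = 0 := by
  have hcont : Continuous fun θ : ℝ => kθF v l ρ θ :=
    (continuous_kθF hv l).comp (continuous_const.prodMk continuous_id)
  rw [intervalIntegral.integral_eq_sub_of_hasDerivAt (f := fun θ => kF v l ρ θ)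
    (fun θ _ => hasDerivAt_kF hv l ρ θ) (hcont.intervalIntegrable _ _)]
  rw [kF_periodic]; ring

lemma hF_integral_zero (hv : ContDiff ℝ 1 v)
    (hdiv : ∀ x : Fin 2 → ℝ, (gradM v x).trace = 0) (l ρ : ℝ) (hρ : 0 < ρ) :
    ∫ θ in (-π)..π, hF v l ρ θ = 0 := by
  have hπ : (-π : ℝ) ≤ π := by linarith [Real.pi_pos]
  have hswap_int : IntegrableOn (fun z : ℝ × ℝ => -(kθF v l z.2 z.1))
      (Ioc (-π) π ×ˢ Ioc 0 ρ) := by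
    apply (((((continuous_kθF hv l).comp
      (continuous_snd.prodMk continuous_fst)).neg).continuousOn.integrableOn_compact
      (isCompact_Icc.prod isCompact_Icc))).mono_set
    exact Set.prod_mono Ioc_subset_Icc_self Ioc_subset_Icc_self
  have key : ρ * ∫ θ in (-π)..π, hF v l ρ θ = 0 := by
    rw [← intervalIntegral.integral_const_mul]
    have hfe : ∀ θ : ℝ, ρ * hF v l ρ θ = ∫ t in Ioc (0:ℝ) ρ, -(kθF v l t θ) := by
      intro θ
      have hcont : Continuous fun t : ℝ => -(kθF v l t θ) :=
        ((continuous_kθF hv l).comp (continuous_id.prodMk continuous_const)).neg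
      have hd := intervalIntegral.integral_eq_sub_of_hasDerivAt
        (f := fun t => t * hF v l t θ) (f' := fun t => -(kθF v l t θ)) (a := 0) (b := ρ)
        (fun t _ => hasDerivAt_rho_mul_hF hv hdiv l t θ)
        (hcont.intervalIntegrable _ _)
      rw [intervalIntegral.integral_of_le hρ.le] at hd
      rw [hd]; ring
    have hz : ∀ t : ℝ, (∫ θ in Ioc (-π) π, -(kθF v l t θ)) = 0 := by
      intro t
      rw [integral_neg, ← intervalIntegral.integral_of_le hπ, kθF_integral_zero hv l t, neg_zero]
    calc ∫ θ in (-π)..π, ρ * hF v l ρ θ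
        = ∫ θ in (-π)..π, ∫ t in Ioc (0:ℝ) ρ, -(kθF v l t θ) := by simp_rw [hfe]
      _ = ∫ θ in Ioc (-π) π, ∫ t in Ioc (0:ℝ) ρ, -(kθF v l t θ) :=
          intervalIntegral.integral_of_le hπ
      _ = ∫ t in Ioc (0:ℝ) ρ, ∫ θ in Ioc (-π) π, -(kθF v l t θ) := by
          apply integral_integral_swap
          rw [Measure.prod_restrict, ← Measure.volume_eq_prod]
          exact hswap_int
      _ = 0 := by simp [hz]
  rcases mul_eq_zero.mp key with h | h
  · exact absurd h hρ.ne'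
  · exact h

lemma inner_zero (hv : ContDiff ℝ 1 v)
    (hdiv : ∀ x : Fin 2 → ℝ, (gradM v x).trace = 0) (μ l ρ : ℝ) (hρ : 0 < ρ) :
    ∫ θ in Ioo (-π) π, μ * (kθF v l ρ θ + hF v l ρ θ) = 0 := by
  have hπ : (-π : ℝ) ≤ π := by linarith [Real.pi_pos]
  have h1 : IntervalIntegrable (fun θ => kθF v l ρ θ) volume (-π) π :=
    ((continuous_kθF hv l).comp (continuous_const.prodMk continuous_id)).intervalIntegrable _ _
  have h2 : IntervalIntegrable (fun θ => hF v l ρ θ) volume (-π) π :=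
    ((continuous_hF hv l).comp (continuous_const.prodMk continuous_id)).intervalIntegrable _ _
  rw [← integral_Ioc_eq_integral_Ioo, ← intervalIntegral.integral_of_le hπ,
    intervalIntegral.integral_const_mul, intervalIntegral.integral_add h1 h2,
    kθF_integral_zero hv l ρ, hF_integral_zero hv hdiv l ρ hρ]
  ring

end RingAux

open RingAux in
/-- Equilibrium of the immersed ring: the zero velocity field together with the
piecewise log pressure profile satisfies the weak momentum balance
`∫_Ω p div v = ∫_B P̂ : ∇v` with `P̂ = -p_s I + μ uθ⊗uθ` (so `F = I`), for every
divergence-free `C¹` test field `v` compactly supported in `Ω`. -/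
theorem ring_weak_momentum_balance (μ R w l : ℝ) (hμ : 0 < μ) (hR : 0 < R)
    (hw : 0 < w) (hl : R + w < l / 2)
    (v : (Fin 2 → ℝ) → (Fin 2 → ℝ)) (hv : ContDiff ℝ 1 v)
    (hvc : HasCompactSupport v)
    (hvΩ : tsupport v ⊆ {x : Fin 2 → ℝ | 0 < x 0 ∧ x 0 < l ∧ 0 < x 1 ∧ x 1 < l})
    (hdiv : ∀ x : Fin 2 → ℝ, (gradM v x).trace = 0) :
    let Ω : Set (Fin 2 → ℝ) := {x | 0 < x 0 ∧ x 0 < l ∧ 0 < x 1 ∧ x 1 < l}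
    let rad : (Fin 2 → ℝ) → ℝ :=
      fun x => Real.sqrt ((x 0 - l / 2) ^ 2 + (x 1 - l / 2) ^ 2)
    let B : Set (Fin 2 → ℝ) := {x | R < rad x ∧ rad x < R + w}
    let p_o : ℝ := -(π * μ / (2 * l ^ 2)) * ((R + w) ^ 2 - R ^ 2)
    let p_i : ℝ := μ * Real.log (1 + w / R) + p_o
    let p : (Fin 2 → ℝ) → ℝ := fun x =>
      if R + w ≤ rad x then p_o
      else if rad x ≤ R then p_i
      else μ * Real.log ((R + w) / rad x) + p_o
    let uθ : (Fin 2 → ℝ) → Fin 2 → ℝ :=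
      fun x => ![-(x 1 - l / 2) / rad x, (x 0 - l / 2) / rad x]
    let Phat : (Fin 2 → ℝ) → Matrix (Fin 2) (Fin 2) ℝ :=
      fun x => (-(p x)) • (1 : Matrix (Fin 2) (Fin 2) ℝ) +
        μ • Matrix.vecMulVec (uθ x) (uθ x)
    (∫ x in Ω, p x * (gradM v x).trace) = ∫ x in B, frob (Phat x) (gradM v x) := by
  intro Ω rad B p_o p_i p uθ Phat
  have hπpos := Real.pi_pos
  have hL : (∫ x in Ω, p x * (gradM v x).trace) = 0 := by
    simp [hdiv]
  rw [hL]
  have hradc : Continuous rad := by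
    have h : Continuous fun x : Fin 2 → ℝ => (x 0 - l / 2) ^ 2 + (x 1 - l / 2) ^ 2 := by
      fun_prop
    exact Real.continuous_sqrt.comp h
  have hBopen : IsOpen B := by
    have hB : B = rad ⁻¹' (Set.Ioo R (R + w)) := rfl
    rw [hB]; exact isOpen_Ioo.preimage hradc
  have hBmeas : MeasurableSet B := hBopen.measurableSet
  have hSmeas : MeasurableSet (Set.Ioo R (R + w) ×ˢ Set.Ioo (-π) π) :=
    (measurableSet_Ioo.prod measurableSet_Ioo)
  have hSsub : Set.Ioo R (R + w) ×ˢ Set.Ioo (-π) π ⊆ polarCoord.target := by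
    rw [polarCoord_target]
    exact Set.prod_mono (fun t ht => hR.trans ht.1) le_rfl
  -- pointwise identity on the polar target
  have hpoint : ∀ q ∈ polarCoord.target,
      q.1 • (B.indicator (fun x => frob (Phat x) (gradM v x)))
          (MeasurableEquiv.finTwoArrow.symm (polarCoord.symm q + (l / 2, l / 2)))
      = (Set.Ioo R (R + w) ×ˢ Set.Ioo (-π) π).indicator
          (fun q => μ * (kθF v l q.1 q.2 + hF v l q.1 q.2)) q := by
    intro q hq
    rw [polarCoord_target] at hq
    obtain ⟨ρ, θ⟩ := q
    obtain ⟨hρ', hθ⟩ := hq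
    have hρ : (0 : ℝ) < ρ := hρ'
    have hx : (MeasurableEquiv.finTwoArrow.symm (polarCoord.symm (ρ, θ) + (l / 2, l / 2))
        : Fin 2 → ℝ) = Ppt l ρ θ := by
      funext i; fin_cases i <;>
        simp [Ppt, MeasurableEquiv.finTwoArrow, MeasurableEquiv.piFinTwo, Prod.ext_iff]
    have h0 : Ppt l ρ θ 0 - l / 2 = ρ * Real.cos θ := by simp [Ppt]
    have h1 : Ppt l ρ θ 1 - l / 2 = ρ * Real.sin θ := by simp [Ppt]
    have hradx : rad (Ppt l ρ θ) = ρ := by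
      show √((Ppt l ρ θ 0 - l / 2) ^ 2 + (Ppt l ρ θ 1 - l / 2) ^ 2) = ρ
      rw [h0, h1, show (ρ * Real.cos θ) ^ 2 + (ρ * Real.sin θ) ^ 2 = ρ ^ 2 by
        linear_combination ρ ^ 2 * Real.sin_sq_add_cos_sq θ]
      exact Real.sqrt_sq hρ.le
    rw [hx]
    by_cases hmem : ρ ∈ Set.Ioo R (R + w)
    · have hxB : Ppt l ρ θ ∈ B := ⟨by rw [hradx]; exact hmem.1, by rw [hradx]; exact hmem.2⟩
      have hqS : ((ρ, θ) : ℝ × ℝ) ∈ Set.Ioo R (R + w) ×ˢ Set.Ioo (-π) π := ⟨hmem, hθ⟩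
      rw [Set.indicator_of_mem hxB, Set.indicator_of_mem hqS, smul_eq_mul, mul_comm]
      have huθ : uθ (Ppt l ρ θ) = ![-Real.sin θ, Real.cos θ] := by
        funext i; fin_cases i
        · show -(Ppt l ρ θ 1 - l / 2) / rad (Ppt l ρ θ) = -Real.sin θ
          rw [h1, hradx, neg_div, mul_div_cancel_left₀ _ hρ.ne']
        · show (Ppt l ρ θ 0 - l / 2) / rad (Ppt l ρ θ) = Real.cos θ
          rw [h0, hradx, mul_div_cancel_left₀ _ hρ.ne']
      have htr := hdiv (Ppt l ρ θ)
      simp only [Matrix.trace, Matrix.diag, Fin.sum_univ_two] at htr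
      have hkey := integrand_eq v μ (p (Ppt l ρ θ)) l ρ θ htr
      have hPhat : Phat (Ppt l ρ θ) = (-(p (Ppt l ρ θ))) • (1 : Matrix (Fin 2) (Fin 2) ℝ) +
          μ • Matrix.vecMulVec ![-Real.sin θ, Real.cos θ] ![-Real.sin θ, Real.cos θ] := by
        show (-(p (Ppt l ρ θ))) • (1 : Matrix (Fin 2) (Fin 2) ℝ) +
          μ • Matrix.vecMulVec (uθ (Ppt l ρ θ)) (uθ (Ppt l ρ θ)) = _
        rw [huθ]
      rw [hPhat]
      exact hkey
    · have hxB : Ppt l ρ θ ∉ B := by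
        intro hxB
        exact hmem ⟨by rw [← hradx]; exact hxB.1, by rw [← hradx]; exact hxB.2⟩
      have hqS : ((ρ, θ) : ℝ × ℝ) ∉ Set.Ioo R (R + w) ×ˢ Set.Ioo (-π) π := fun h => hmem h.1
      rw [Set.indicator_of_notMem hxB, Set.indicator_of_notMem hqS, smul_zero]
  have hIntf2 : IntegrableOn (fun q : ℝ × ℝ => μ * (kθF v l q.1 q.2 + hF v l q.1 q.2))
      (Set.Ioo R (R + w) ×ˢ Set.Ioo (-π) π) := by
    have hc : Continuous fun q : ℝ × ℝ => μ * (kθF v l q.1 q.2 + hF v l q.1 q.2) :=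
      continuous_const.mul ((continuous_kθF hv l).add (continuous_hF hv l))
    have := (hc.continuousOn.integrableOn_compact (isCompact_Icc.prod isCompact_Icc) :
      IntegrableOn _ (Set.Icc R (R + w) ×ˢ Set.Icc (-π) π))
    exact this.mono_set (Set.prod_mono Set.Ioo_subset_Icc_self Set.Ioo_subset_Icc_self)
  symm
  calc (∫ x in B, frob (Phat x) (gradM v x))
      = ∫ x, B.indicator (fun x => frob (Phat x) (gradM v x)) x :=
        (integral_indicator hBmeas).symm
    _ = ∫ q : ℝ × ℝ, B.indicator (fun x => frob (Phat x) (gradM v x))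
          (MeasurableEquiv.finTwoArrow.symm q) :=
        (((volume_preserving_finTwoArrow ℝ).symm _).integral_comp
          (MeasurableEquiv.measurableEmbedding _) _).symm
    _ = ∫ q : ℝ × ℝ, B.indicator (fun x => frob (Phat x) (gradM v x))
          (MeasurableEquiv.finTwoArrow.symm (q + (l / 2, l / 2))) :=
        (integral_add_right_eq_self _ _).symm
    _ = ∫ q in polarCoord.target, q.1 • B.indicator (fun x => frob (Phat x) (gradM v x))
          (MeasurableEquiv.finTwoArrow.symm (polarCoord.symm q + (l / 2, l / 2))) :=
        (integral_comp_polarCoord_symm _).symm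
    _ = ∫ q in polarCoord.target, (Set.Ioo R (R + w) ×ˢ Set.Ioo (-π) π).indicator
          (fun q => μ * (kθF v l q.1 q.2 + hF v l q.1 q.2)) q :=
        setIntegral_congr_fun polarCoord.open_target.measurableSet hpoint
    _ = ∫ q in polarCoord.target ∩ (Set.Ioo R (R + w) ×ˢ Set.Ioo (-π) π),
          μ * (kθF v l q.1 q.2 + hF v l q.1 q.2) := setIntegral_indicator hSmeas
    _ = ∫ q in Set.Ioo R (R + w) ×ˢ Set.Ioo (-π) π,
          μ * (kθF v l q.1 q.2 + hF v l q.1 q.2) := by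
        rw [Set.inter_eq_self_of_subset_right hSsub]
    _ = ∫ ρ in Set.Ioo R (R + w), ∫ θ in Set.Ioo (-π) π, μ * (kθF v l ρ θ + hF v l ρ θ) := by
        rw [Measure.volume_eq_prod]
        exact setIntegral_prod _ (by rwa [← Measure.volume_eq_prod])
    _ = ∫ ρ in Set.Ioo R (R + w), (0 : ℝ) := by
        refine setIntegral_congr_fun measurableSet_Ioo fun ρ hρ => ?_
        exact inner_zero hv hdiv μ l ρ (hR.trans hρ.1)
    _ = 0 := by simp
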